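/- Let g : ℝ → ℝ be a real trigonometric polynomial of degree at most M (i.e., g(t) = a_0 + Σ_{m=1}^{M} (a_m cos 2πmt + b_m sin 2πmt)), not identically zero, and let ε > 0. Then (1/(2ε)) · ∫_{{t ∈ [0,1] : |g(t)| ≤ ε}} |g'(t)| dt ≤ 6M. -/

import Mathlib

open Real MeasureTheory

lemma lemA (g g1 : ℝ → ℝ) (hd : ∀ t, HasDerivAt g (g1 t) t) (hc : Continuous g1)
    (u v : ℝ) (hpos : ∀ t ∈ Set.Ioo u v, 0 ≤ g1 t)
    (ε : ℝ) (hε : 0 < ε) :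
    ∫ t in {t | |g t| ≤ ε} ∩ Set.Icc u v, |g1 t| ≤ 2 * ε := by
  have hgc : Continuous g := by
    rw [continuous_iff_continuousAt]; exact fun t => (hd t).continuousAt
  have hderiv : deriv g = g1 := funext fun t => (hd t).deriv
  have hmono : MonotoneOn g (Set.Icc u v) := by
    apply monotoneOn_of_deriv_nonneg (convex_Icc u v) hgc.continuousOn
    · intro x hx
      exact (hd x).differentiableAt.differentiableWithinAt
    · intro x hx
      rw [interior_Icc] at hx
      rw [hderiv]; exact hpos x hx
  set S : Set ℝ := {t | |g t| ≤ ε} ∩ Set.Icc u v with hS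
  have hSc : IsClosed S := by
    apply IsClosed.inter _ isClosed_Icc
    have : {t | |g t| ≤ ε} = g ⁻¹' Set.Icc (-ε) ε := by
      ext t; simp [abs_le]
    rw [this]; exact isClosed_Icc.preimage hgc
  have hSsub : S ⊆ Set.Icc u v := Set.inter_subset_right
  have hbdd : BddBelow S ∧ BddAbove S :=
    ⟨(bddBelow_Icc).mono hSsub, (bddAbove_Icc).mono hSsub⟩
  rcases S.eq_empty_or_nonempty with hne | hne
  · rw [hne]; simp; positivity
  · set c := sInf S
    set d := sSup S
    have hcS : c ∈ S := hSc.csInf_mem hne hbdd.1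
    have hdS : d ∈ S := hSc.csSup_mem hne hbdd.2
    have hcd : c ≤ d := Real.sInf_le_sSup _ hbdd.1 hbdd.2 -- may not exist
    have hSeq : S = Set.Icc c d := by
      apply Set.Subset.antisymm
      · exact fun x hx => ⟨csInf_le hbdd.1 hx, le_csSup hbdd.2 hx⟩
      · intro z hz
        have hzuv : z ∈ Set.Icc u v :=
          ⟨(hSsub hcS).1.trans hz.1, hz.2.trans (hSsub hdS).2⟩
        refine ⟨?_, hzuv⟩
        have h1 : g c ≤ g z := hmono (hSsub hcS) hzuv hz.1
        have h2 : g z ≤ g d := hmono hzuv (hSsub hdS) hz.2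
        have hac : |g c| ≤ ε := hcS.1
        have had : |g d| ≤ ε := hdS.1
        rw [Set.mem_setOf_eq, abs_le]
        rw [abs_le] at hac had
        constructor <;> linarith [hac.1, had.2]
    rw [hSeq]
    have hIoosub : Set.Ioo c d ⊆ Set.Ioo u v := by
      intro x hx
      exact ⟨lt_of_le_of_lt (hSsub hcS).1 hx.1, lt_of_lt_of_le hx.2 (hSsub hdS).2⟩
    rw [MeasureTheory.integral_Icc_eq_integral_Ioo]
    have : ∫ t in Set.Ioo c d, |g1 t| = ∫ t in Set.Ioo c d, g1 t := by
      apply MeasureTheory.setIntegral_congr_fun measurableSet_Ioo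
      intro t ht
      exact abs_of_nonneg (hpos t (hIoosub ht))
    rw [this]
    have : ∫ t in Set.Ioo c d, g1 t = ∫ t in c..d, g1 t := by
      rw [intervalIntegral.integral_of_le hcd, MeasureTheory.integral_Ioc_eq_integral_Ioo]
    rw [this, intervalIntegral.integral_eq_sub_of_hasDerivAt (fun t _ => hd t)
      (hc.intervalIntegrable c d)]
    have hac : |g c| ≤ ε := hcS.1
    have had : |g d| ≤ ε := hdS.1
    rw [abs_le] at hac had
    linarith [hac.1, had.2]


lemma lemA2 (g g1 : ℝ → ℝ) (hd : ∀ t, HasDerivAt g (g1 t) t) (hc : Continuous g1)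
    (u v : ℝ) (hne0 : ∀ t ∈ Set.Ioo u v, g1 t ≠ 0)
    (ε : ℝ) (hε : 0 < ε) :
    ∫ t in {t | |g t| ≤ ε} ∩ Set.Icc u v, |g1 t| ≤ 2 * ε := by
  have hsign : (∀ t ∈ Set.Ioo u v, 0 ≤ g1 t) ∨ (∀ t ∈ Set.Ioo u v, g1 t ≤ 0) := by
    by_contra hcon
    push_neg at hcon
    obtain ⟨⟨x, hx, hxneg⟩, ⟨y, hy, hypos⟩⟩ := hcon
    have h0 : (0:ℝ) ∈ Set.uIcc (g1 x) (g1 y) :=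
      Set.mem_uIcc.2 (Or.inl ⟨le_of_lt hxneg, le_of_lt hypos⟩)
    obtain ⟨z, hz, hz0⟩ := intermediate_value_uIcc (hc.continuousOn) h0
    have : z ∈ Set.Ioo u v := Set.ordConnected_Ioo.uIcc_subset hx hy hz
    exact hne0 z this hz0
  rcases hsign with hpos | hneg
  · exact lemA g g1 hd hc u v hpos ε hε
  · have h := lemA (fun t => -g t) (fun t => -g1 t) (fun t => (hd t).neg) hc.neg u v
      (fun t ht => by simpa using hneg t ht) ε hε
    simpa using h

lemma keyC (g g1 : ℝ → ℝ) (hd : ∀ t, HasDerivAt g (g1 t) t) (hc : Continuous g1)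
    (ε : ℝ) (hε : 0 < ε) (n : ℕ) :
    ∀ u v : ℝ, u ≤ v → ({t ∈ Set.Ioo u v | g1 t = 0}).Finite →
    ({t ∈ Set.Ioo u v | g1 t = 0}).ncard ≤ n →
    ∫ t in {t | |g t| ≤ ε} ∩ Set.Icc u v, |g1 t| ≤ ((n:ℝ)+1) * (2*ε) := by
  have hgc : Continuous g := by
    rw [continuous_iff_continuousAt]; exact fun t => (hd t).continuousAt
  have hEmeas : MeasurableSet {t : ℝ | |g t| ≤ ε} := by
    have : {t | |g t| ≤ ε} = g ⁻¹' Set.Icc (-ε) ε := by ext t; simp [abs_le]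
    rw [this]; exact (isClosed_Icc.preimage hgc).measurableSet
  have hint : ∀ s : Set ℝ, ∀ p q : ℝ, s ⊆ Set.Icc p q →
      IntegrableOn (fun t => |g1 t|) s volume := by
    intro s p q hs
    exact (hc.abs.integrableOn_Icc).mono_set hs
  induction n using Nat.strong_induction_on with
  | _ n IH =>
    intro u v huv hfin hcard
    set Z := {t ∈ Set.Ioo u v | g1 t = 0} with hZ
    rcases Z.eq_empty_or_nonempty with hZe | ⟨w, hw⟩
    · have hne0 : ∀ t ∈ Set.Ioo u v, g1 t ≠ 0 := by
        intro t ht h0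
        exact Set.eq_empty_iff_forall_notMem.1 hZe t ⟨ht, h0⟩
      have := lemA2 g g1 hd hc u v hne0 ε hε
      nlinarith [this, Nat.cast_nonneg (α := ℝ) n, hε.le]
    · obtain ⟨hwuv, hw0⟩ := hw
      set Zl := {t ∈ Set.Ioo u w | g1 t = 0} with hZl
      set Zr := {t ∈ Set.Ioo w v | g1 t = 0} with hZr
      have hsubl : Zl ⊆ Z \ {w} := fun t ht =>
        ⟨⟨⟨ht.1.1, ht.1.2.trans hwuv.2⟩, ht.2⟩, ne_of_lt ht.1.2⟩
      have hsubr : Zr ⊆ Z \ {w} := fun t ht =>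
        ⟨⟨⟨hwuv.1.trans ht.1.1, ht.1.2⟩, ht.2⟩, (ne_of_gt ht.1.1)⟩
      have hdisj : Disjoint Zl Zr := by
        rw [Set.disjoint_left]
        intro t htl htr
        exact absurd (htl.1.2.trans htr.1.1) (lt_irrefl t)
      have hfinl : Zl.Finite := hfin.subset (hsubl.trans Set.diff_subset)
      have hfinr : Zr.Finite := hfin.subset (hsubr.trans Set.diff_subset)
      have hcards : Zl.ncard + Zr.ncard + 1 ≤ n := by
        have h1 : Zl.ncard + Zr.ncard = (Zl ∪ Zr).ncard :=
          (Set.ncard_union_eq hdisj hfinl hfinr).symm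
        have h2 : (Zl ∪ Zr).ncard ≤ (Z \ {w}).ncard :=
          Set.ncard_le_ncard (Set.union_subset hsubl hsubr) (hfin.diff)
        have h3 : (Z \ {w}).ncard = Z.ncard - 1 :=
          Set.ncard_diff_singleton_of_mem (s := Z) ⟨hwuv, hw0⟩
        have h4 : 0 < Z.ncard := (Set.ncard_pos hfin).2 ⟨w, hwuv, hw0⟩
        omega
      have hIHl := IH Zl.ncard (by omega) u w hwuv.1.le hfinl le_rfl
      have hIHr := IH Zr.ncard (by omega) w v hwuv.2.le hfinr le_rfl
      -- split the integral
      have hsplit : {t | |g t| ≤ ε} ∩ Set.Icc u v =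
          ({t | |g t| ≤ ε} ∩ Set.Icc u w) ∪ ({t | |g t| ≤ ε} ∩ Set.Ioc w v) := by
        rw [← Set.inter_union_distrib_left, Set.Icc_union_Ioc_eq_Icc hwuv.1.le hwuv.2.le]
      have hdisj2 : Disjoint ({t : ℝ | |g t| ≤ ε} ∩ Set.Icc u w)
          ({t : ℝ | |g t| ≤ ε} ∩ Set.Ioc w v) := by
        rw [Set.disjoint_left]
        rintro t ⟨-, ht1⟩ ⟨-, ht2⟩
        exact absurd (ht1.2.trans_lt ht2.1) (lt_irrefl t)
      rw [hsplit, MeasureTheory.setIntegral_union hdisj2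
        (hEmeas.inter measurableSet_Ioc)
        (hint _ u w Set.inter_subset_right)
        ((hint _ w v (Set.inter_subset_right.trans Set.Ioc_subset_Icc_self)))]
      have hmono2 : ∫ t in {t | |g t| ≤ ε} ∩ Set.Ioc w v, |g1 t| ≤
          ∫ t in {t | |g t| ≤ ε} ∩ Set.Icc w v, |g1 t| := by
        apply MeasureTheory.setIntegral_mono_set
          (hint _ w v Set.inter_subset_right)
          (Filter.Eventually.of_forall fun t => abs_nonneg _)
        exact HasSubset.Subset.eventuallyLE
          (Set.inter_subset_inter_right _ Set.Ioc_subset_Icc_self)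
      have hfinal : (Zl.ncard : ℝ) + 1 + ((Zr.ncard : ℝ) + 1) ≤ (n : ℝ) + 1 := by
        have : (Zl.ncard : ℝ) + (Zr.ncard : ℝ) + 1 ≤ (n : ℝ) := by
          exact_mod_cast (Nat.cast_le (α := ℝ)).2 hcards
        linarith
      nlinarith [hIHl, hIHr, hmono2, hε.le, hfinal]

lemma perterm (A B θ : ℝ) :
    ((B:ℂ) + (A:ℂ) * Complex.I) * Complex.exp ((θ:ℂ) * Complex.I) +
      (starRingEnd ℂ) ((B:ℂ) + (A:ℂ) * Complex.I) * (Complex.exp ((θ:ℂ) * Complex.I))⁻¹ =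
      2 * ((B * Real.cos θ - A * Real.sin θ : ℝ) : ℂ) := by
  set c : ℂ := (B:ℂ) + (A:ℂ) * Complex.I
  set w : ℂ := Complex.exp ((θ:ℂ) * Complex.I) with hwdef
  have hw : w⁻¹ = (starRingEnd ℂ) w := by
    rw [hwdef, ← Complex.exp_conj]
    simp [Complex.exp_neg]
  rw [hw, ← map_mul, Complex.add_conj]
  have : (c * w).re = B * Real.cos θ - A * Real.sin θ := by
    simp [c, hwdef, Complex.exp_mul_I, Complex.mul_re, Complex.add_re, Complex.cos_ofReal_re,
      Complex.sin_ofReal_re]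
  rw [this]
  push_cast
  ring

lemma zeros_bound (M : ℕ) (a b : ℕ → ℝ) (g1 : ℝ → ℝ)
    (hg1 : ∀ t, g1 t = ∑ m ∈ Finset.Icc 1 M,
      (2*π*m) * (b m * Real.cos (2*π*m*t) - a m * Real.sin (2*π*m*t)))
    (hnz : ¬ ∀ t, g1 t = 0) :
    {t ∈ Set.Ioo (0:ℝ) 1 | g1 t = 0}.Finite ∧
      {t ∈ Set.Ioo (0:ℝ) 1 | g1 t = 0}.ncard ≤ 2*M := by
  classical
  set c : ℕ → ℂ := fun m => ((2*π*m*(b m) : ℝ) : ℂ) + ((2*π*m*(a m) : ℝ) : ℂ) * Complex.I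
    with hc
  set Q : Polynomial ℂ := ∑ m ∈ Finset.Icc 1 M,
    (Polynomial.C (c m) * Polynomial.X ^ (M+m) +
     Polynomial.C ((starRingEnd ℂ) (c m)) * Polynomial.X ^ (M-m)) with hQ
  set e : ℝ → ℂ := fun t => Complex.exp (((2*π*t : ℝ) : ℂ) * Complex.I) with he
  have hene : ∀ t, e t ≠ 0 := fun t => Complex.exp_ne_zero _
  -- the key identity
  have hkey : ∀ t : ℝ, Q.eval (e t) = 2 * (e t)^M * ((g1 t : ℝ) : ℂ) := by
    intro t
    rw [hg1, hQ]
    rw [Polynomial.eval_finset_sum, Complex.ofReal_sum, Finset.mul_sum]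
    apply Finset.sum_congr rfl
    intro m hm
    have hm1 : 1 ≤ m := (Finset.mem_Icc.1 hm).1
    have hmM : m ≤ M := (Finset.mem_Icc.1 hm).2
    simp only [Polynomial.eval_add, Polynomial.eval_mul, Polynomial.eval_C, Polynomial.eval_pow,
      Polynomial.eval_X]
    have hepow : ∀ k : ℕ, (e t)^k = Complex.exp (((2*π*k*t : ℝ) : ℂ) * Complex.I) := by
      intro k
      rw [he, ← Complex.exp_nat_mul]
      congr 1
      push_cast
      ring
    have hsub : (e t)^(M-m) = (e t)^M * ((e t)^m)⁻¹ := by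
      rw [← pow_sub₀ (e t) (hene t) hmM]
    rw [pow_add, hsub]
    have hpt := perterm (2*π*m*(a m)) (2*π*m*(b m)) (2*π*m*t)
    rw [hepow m]
    calc (c m) * ((e t)^M * Complex.exp (((2*π*m*t : ℝ) : ℂ) * Complex.I)) +
          (starRingEnd ℂ) (c m) * ((e t)^M * (Complex.exp (((2*π*m*t : ℝ) : ℂ) * Complex.I))⁻¹)
        = (e t)^M * ((c m) * Complex.exp (((2*π*m*t : ℝ) : ℂ) * Complex.I) +
          (starRingEnd ℂ) (c m) * (Complex.exp (((2*π*m*t : ℝ) : ℂ) * Complex.I))⁻¹) := by ring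
      _ = (e t)^M * (2 * ((2*π*m*(b m) * Real.cos (2*π*m*t) - 2*π*m*(a m) * Real.sin (2*π*m*t) : ℝ) : ℂ)) := by
          rw [hc]; rw [hpt]
      _ = 2 * (e t)^M * (((2*π*m) * (b m * Real.cos (2*π*m*t) - a m * Real.sin (2*π*m*t)) : ℝ) : ℂ) := by
          push_cast; ring
  -- Q is nonzero
  have hQ0 : Q ≠ 0 := by
    intro h0
    apply hnz
    intro t
    have := hkey t
    rw [h0] at this
    simp only [Polynomial.eval_zero] at this
    have h2 : ((g1 t : ℝ) : ℂ) = 0 := by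
      have hne : (2 : ℂ) * (e t)^M ≠ 0 := by
        apply mul_ne_zero two_ne_zero (pow_ne_zero _ (hene t))
      field_simp at this
      exact (mul_eq_zero.1 this.symm).resolve_left hne
    exact_mod_cast h2
  -- degree bound
  have hdeg : Q.natDegree ≤ 2*M := by
    rw [hQ]
    apply Polynomial.natDegree_sum_le_of_forall_le
    intro m hm
    have hmM : m ≤ M := (Finset.mem_Icc.1 hm).2
    apply le_trans (Polynomial.natDegree_add_le _ _)
    apply max_le
    · exact le_trans (Polynomial.natDegree_C_mul_le _ _)
        (by rw [Polynomial.natDegree_X_pow]; omega)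
    · exact le_trans (Polynomial.natDegree_C_mul_le _ _)
        (by rw [Polynomial.natDegree_X_pow]; omega)
  -- roots
  set R : Set ℂ := {z | Q.IsRoot z} with hR
  have hRfin : R.Finite := Polynomial.finite_setOf_isRoot hQ0
  have hRcard : R.ncard ≤ 2*M := by
    have hReq : R = (Q.roots.toFinset : Set ℂ) := by
      ext z
      simp [hR, Polynomial.mem_roots', hQ0]
    rw [hReq, Set.ncard_coe_finset]
    exact le_trans (Multiset.toFinset_card_le _) (le_trans (Polynomial.card_roots' Q) hdeg)
  -- injectivity of e on (0,1)
  have hinj : Set.InjOn e (Set.Ioo 0 1) := by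
    intro s hs t ht hst
    rw [he] at hst
    rw [Complex.exp_eq_exp_iff_exists_int] at hst
    obtain ⟨n, hn⟩ := hst
    have h2πI : (2 * (π:ℂ) * Complex.I) ≠ 0 := by
      simp [Real.pi_ne_zero, Complex.I_ne_zero]
    have hn' : (s : ℂ) = (t : ℂ) + (n : ℂ) := by
      have : (2 * (π:ℂ) * Complex.I) * s = (2 * (π:ℂ) * Complex.I) * (t + n) := by
        push_cast at hn ⊢
        linear_combination hn
      exact mul_left_cancel₀ h2πI this
    have hn'' : s = t + (n : ℝ) := by exact_mod_cast hn'
    have : n = 0 := by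
      have h1 : (n : ℝ) = s - t := by linarith
      have h2 : -1 < (n:ℝ) := by
        rw [h1]; nlinarith [hs.1, hs.2, ht.1, ht.2]
      have h3 : (n:ℝ) < 1 := by
        rw [h1]; nlinarith [hs.1, hs.2, ht.1, ht.2]
      have ha : (-1 : ℤ) < n := by exact_mod_cast (show ((-1:ℤ):ℝ) < (n:ℝ) by push_cast; linarith)
      have hb : n < (1 : ℤ) := by exact_mod_cast (show ((n:ℤ):ℝ) < ((1:ℤ):ℝ) by push_cast; linarith)
      omega
    rw [hn'', this] at *
    simp
  -- maps to roots
  set Z : Set ℝ := {t ∈ Set.Ioo (0:ℝ) 1 | g1 t = 0} with hZdef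
  have hmaps : Set.MapsTo e Z R := by
    intro t ht
    have := hkey t
    rw [ht.2] at this
    simp only [Complex.ofReal_zero, mul_zero] at this
    exact this
  have hZsub : Set.InjOn e Z := hinj.mono (fun t ht => ht.1)
  have himfin : (e '' Z).Finite := hRfin.subset (hmaps.image_subset)
  have hZfin : Z.Finite := Set.Finite.of_finite_image himfin hZsub
  refine ⟨hZfin, ?_⟩
  have h1 : Z.ncard = (e '' Z).ncard := (Set.ncard_image_of_injOn hZsub).symm
  rw [h1]
  exact le_trans (Set.ncard_le_ncard (hmaps.image_subset) hRfin) hRcard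

/-- Kac's bound: for a nonzero real trigonometric polynomial `g` of degree at most
`M` and `ε > 0`, `(1/(2ε)) ∫_{t ∈ [0,1] : |g(t)| ≤ ε} |g'(t)| dt ≤ 6M`. -/
theorem stmt4 (M : ℕ) (a b : ℕ → ℝ) (g : ℝ → ℝ)
    (hg : ∀ t, g t = a 0 + ∑ m ∈ Finset.Icc 1 M,
      (a m * Real.cos (2 * π * m * t) + b m * Real.sin (2 * π * m * t)))
    (hg0 : g ≠ 0) (ε : ℝ) (hε : 0 < ε) :
    (1 / (2 * ε)) *
      ∫ t in {t : ℝ | |g t| ≤ ε} ∩ Set.Icc (0 : ℝ) 1, |deriv g t| ≤ 6 * M := by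
  set g1 : ℝ → ℝ := fun t => ∑ m ∈ Finset.Icc 1 M,
    (2*π*m) * (b m * Real.cos (2*π*m*t) - a m * Real.sin (2*π*m*t)) with hg1def
  have hd : ∀ t, HasDerivAt g (g1 t) t := by
    intro t₀
    have hgg : g = fun t => a 0 + ∑ m ∈ Finset.Icc 1 M,
        (a m * Real.cos (2 * π * m * t) + b m * Real.sin (2 * π * m * t)) := funext hg
    rw [hgg]
    apply HasDerivAt.const_add
    have key : ∀ m ∈ Finset.Icc 1 M, HasDerivAt
        (fun t => a m * Real.cos (2 * π * m * t) + b m * Real.sin (2 * π * m * t))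
        ((2*π*m) * (b m * Real.cos (2*π*m*t₀) - a m * Real.sin (2*π*m*t₀))) t₀ := by
      intro m _
      have h1 : HasDerivAt (fun t : ℝ => 2*π*m*t) (2*π*m) t₀ := by
        simpa using (hasDerivAt_id t₀).const_mul (2*π*(m:ℝ))
      have h2 := (h1.cos).const_mul (a m)
      have h3 := (h1.sin).const_mul (b m)
      refine (h2.fun_add h3).congr_deriv ?_
      ring
    exact HasDerivAt.fun_sum key
  have hc1 : Continuous g1 := by
    apply continuous_finset_sum
    intro m _
    fun_prop
  have hderiv : deriv g = g1 := funext fun t => (hd t).deriv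
  rw [hderiv]
  by_cases hz : ∀ t, g1 t = 0
  · have h0 : ∫ t in {t : ℝ | |g t| ≤ ε} ∩ Set.Icc (0:ℝ) 1, |g1 t| = 0 := by
      have : ∀ t : ℝ, |g1 t| = 0 := fun t => by rw [hz t]; simp
      simp [this]
    rw [h0, mul_zero]
    positivity
  · have hM : 1 ≤ M := by
      rcases Nat.eq_zero_or_pos M with h | h
      · exfalso; apply hz; intro t; simp [hg1def, h]
      · exact h
    obtain ⟨hfin, hcard⟩ := zeros_bound M a b g1 (fun t => rfl) hz
    have hkey := keyC g g1 hd hc1 ε hε (2*M) 0 1 zero_le_one hfin hcard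
    have hI0 : 0 ≤ ∫ t in {t : ℝ | |g t| ≤ ε} ∩ Set.Icc (0:ℝ) 1, |g1 t| :=
      MeasureTheory.integral_nonneg fun t => abs_nonneg _
    have h2ε : (0:ℝ) < 2*ε := by linarith
    have hstep : (1 / (2*ε)) * ∫ t in {t : ℝ | |g t| ≤ ε} ∩ Set.Icc (0:ℝ) 1, |g1 t| ≤
        (1 / (2*ε)) * (((2*M : ℕ) : ℝ) + 1) * (2*ε) := by
      calc (1 / (2*ε)) * ∫ t in {t : ℝ | |g t| ≤ ε} ∩ Set.Icc (0:ℝ) 1, |g1 t|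
          ≤ (1 / (2*ε)) * ((((2*M : ℕ) : ℝ) + 1) * (2*ε)) :=
            mul_le_mul_of_nonneg_left hkey (by positivity)
        _ = (1 / (2*ε)) * (((2*M : ℕ) : ℝ) + 1) * (2*ε) := by ring
    have hsimp : (1 / (2*ε)) * (((2*M : ℕ) : ℝ) + 1) * (2*ε) = ((2*M : ℕ) : ℝ) + 1 := by
      field_simp
    rw [hsimp] at hstep
    refine hstep.trans ?_
    have : (1 : ℝ) ≤ (M : ℝ) := by exact_mod_cast hM
    push_cast
    linarith
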